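/- Let ψ : [1,∞) → ℝ be positive, convex, differentiable with ψ'(t) < 0 for all t ≥ 1, and ψ(t) → 0 as t → ∞; set λ(t) = ψ(t)/|ψ'(t)| and α(t) = ψ(t)/(t·|ψ'(t)|). Assume λ is nondecreasing on [1,∞) and α is nonincreasing on [1,∞). Then for every a ≥ 1 with α(a) < 1, the integral ∫_a^∞ ψ(t) dt is finite and λ(a)·ψ(a) ≤ ∫_a^∞ ψ(t) dt ≤ λ(a)·ψ(a)·(1 + α(a)/(1 − α(a))). -/

import Mathlib

open MeasureTheory Real Filter

/-- For positive, convex, differentiable, strictly decreasing-to-zero `ψ` on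
`[1,∞)`, with `λ(t) = ψ(t)/|ψ'(t)|` nondecreasing and `α(t) = ψ(t)/(t|ψ'(t)|)` nonincreasing:
for `a ≥ 1` with `α(a) < 1`, `∫_a^∞ ψ` is finite and
`λ(a)ψ(a) ≤ ∫_a^∞ ψ(t) dt ≤ λ(a)ψ(a)(1 + α(a)/(1 - α(a)))`. -/
theorem integral_psi_two_sided (ψ ψ' : ℝ → ℝ)
    (hpos : ∀ t, 1 ≤ t → 0 < ψ t)
    (hconv : ConvexOn ℝ (Set.Ici (1 : ℝ)) ψ)
    (hderiv : ∀ t, 1 ≤ t → HasDerivAt ψ (ψ' t) t)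
    (hneg : ∀ t, 1 ≤ t → ψ' t < 0)
    (hlim : Filter.Tendsto ψ Filter.atTop (nhds 0))
    (hlam_mono : ∀ s t, 1 ≤ s → s ≤ t → ψ s / |ψ' s| ≤ ψ t / |ψ' t|)
    (halp_anti : ∀ s t, 1 ≤ s → s ≤ t → ψ t / (t * |ψ' t|) ≤ ψ s / (s * |ψ' s|))
    (a : ℝ) (ha : 1 ≤ a) (hαa : ψ a / (a * |ψ' a|) < 1) :
    MeasureTheory.IntegrableOn ψ (Set.Ici a) ∧
      ψ a / |ψ' a| * ψ a ≤ (∫ t in Set.Ici a, ψ t) ∧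
      (∫ t in Set.Ici a, ψ t) ≤
        ψ a / |ψ' a| * ψ a * (1 + (ψ a / (a * |ψ' a|)) / (1 - ψ a / (a * |ψ' a|))) := by
  have ha0 : (0:ℝ) < a := lt_of_lt_of_le one_pos ha
  set L := ψ a / |ψ' a| with hL
  set A := ψ a / (a * |ψ' a|) with hA
  have habs : ∀ t, 1 ≤ t → |ψ' t| = -ψ' t := fun t ht => abs_of_neg (hneg t ht)
  have hψ'pos : ∀ t, 1 ≤ t → 0 < -ψ' t := fun t ht => neg_pos.2 (hneg t ht)
  -- ψ' is monotone on [1, ∞)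
  have hmono : MonotoneOn ψ' (Set.Ici (1:ℝ)) := by
    have h := hconv.monotoneOn_deriv (fun x hx => (hderiv x hx).differentiableAt)
    intro s hs t ht hst
    rw [← (hderiv s hs).deriv, ← (hderiv t ht).deriv]
    exact h hs ht hst
  have hcontψ : ContinuousOn ψ (Set.Ici (1:ℝ)) :=
    fun t ht => (hderiv t ht).continuousAt.continuousWithinAt
  -- A, L positivity and relation
  have habsa : 0 < |ψ' a| := by rw [habs a ha]; exact hψ'pos a ha
  have hApos : 0 < A := div_pos (hpos a ha) (mul_pos ha0 habsa)
  have hLA : L = A * a := by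
    rw [hL, hA]; field_simp
  have h1A : 0 < 1 - A := sub_pos.2 hαa
  -- pointwise bounds for t ≥ a
  have hlow : ∀ t, a ≤ t → L * (-ψ' t) ≤ ψ t := by
    intro t hat
    have ht1 : (1:ℝ) ≤ t := le_trans ha hat
    have h := hlam_mono a t ha hat
    rw [habs t ht1] at h
    have := (le_div_iff₀ (hψ'pos t ht1)).1 (hL ▸ h)
    linarith
  have hup : ∀ t, a ≤ t → ψ t ≤ A * (t * (-ψ' t)) := by
    intro t hat
    have ht1 : (1:ℝ) ≤ t := le_trans ha hat
    have h := halp_anti a t ha hat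
    rw [habs t ht1] at h
    have hden : 0 < t * (-ψ' t) := mul_pos (lt_of_lt_of_le one_pos ht1) (hψ'pos t ht1)
    have := (div_le_iff₀ hden).1 (hA ▸ h)
    linarith
  -- interval integrability
  have hsub : ∀ T, a ≤ T → Set.uIcc a T ⊆ Set.Ici (1:ℝ) := by
    intro T hT
    rw [Set.uIcc_of_le hT]
    exact fun x hx => le_trans ha hx.1
  have hψ'ii : ∀ T, a ≤ T → IntervalIntegrable ψ' volume a T := by
    intro T hT
    exact (hmono.mono (hsub T hT)).intervalIntegrable
  have hψii : ∀ T, a ≤ T → IntervalIntegrable ψ volume a T := by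
    intro T hT
    exact (hcontψ.mono (hsub T hT)).intervalIntegrable
  -- FTC on [a, T]
  have hftc : ∀ T, a ≤ T → ∫ t in a..T, ψ' t = ψ T - ψ a := by
    intro T hT
    exact intervalIntegral.integral_eq_sub_of_hasDerivAt
      (fun t ht => hderiv t (le_trans ha ((Set.uIcc_of_le hT ▸ ht).1))) (hψ'ii T hT)
  -- integration by parts on [a, T]
  have hibp : ∀ T, a ≤ T →
      ∫ t in a..T, t * ψ' t = T * ψ T - a * ψ a - ∫ t in a..T, ψ t := by
    intro T hT
    have h := intervalIntegral.integral_mul_deriv_eq_deriv_mul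
      (u := fun x => x) (v := ψ) (u' := fun _ => (1:ℝ)) (v' := ψ')
      (fun x _ => hasDerivAt_id x)
      (fun x hx => hderiv x (le_trans ha ((Set.uIcc_of_le hT ▸ hx).1)))
      intervalIntegrable_const (hψ'ii T hT)
    simpa using h
  -- uniform bound on ∫ t in a..T, ψ t
  have hC : ∀ T, a ≤ T → ∫ t in a..T, ψ t ≤ L * ψ a / (1 - A) := by
    intro T hT
    have hT1 : (1:ℝ) ≤ T := le_trans ha hT
    have hint2 : IntervalIntegrable (fun t => (-A * t) * ψ' t) volume a T :=
      (hψ'ii T hT).continuousOn_mul (by fun_prop)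
    have hmon : ∫ t in a..T, ψ t ≤ ∫ t in a..T, (-A * t) * ψ' t := by
      apply intervalIntegral.integral_mono_on hT (hψii T hT) hint2
      intro x hx
      have := hup x hx.1
      nlinarith [this]
    have heq : ∫ t in a..T, (-A * t) * ψ' t = -A * (T * ψ T - a * ψ a - ∫ t in a..T, ψ t) := by
      have : ∀ t, (-A * t) * ψ' t = -A * (t * ψ' t) := fun t => by ring
      simp_rw [this]
      rw [intervalIntegral.integral_const_mul, hibp T hT]
    have hTψ : 0 ≤ T * ψ T := mul_nonneg (by linarith) (hpos T hT1).le
    have hIψ : 0 ≤ ∫ t in a..T, ψ t := by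
      apply intervalIntegral.integral_nonneg hT
      intro x hx
      exact (hpos x (le_trans ha hx.1)).le
    rw [heq] at hmon
    rw [hLA, le_div_iff₀ h1A]
    nlinarith [hmon, hTψ, hApos]
  set C := L * ψ a / (1 - A) with hCdef
  -- integrability of ψ on Ioi a
  have hψIoc : ∀ i : ℝ, IntegrableOn ψ (Set.Ioc a i) := by
    intro i
    rcases le_or_gt i a with h | h
    · simp [Set.Ioc_eq_empty (not_lt.2 h)]
    · exact (intervalIntegrable_iff_integrableOn_Ioc_of_le h.le).1 (hψii i h.le)
  have hnorm : ∀ T, a ≤ T → (∫ x in a..T, ‖ψ x‖) = ∫ x in a..T, ψ x := by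
    intro T hT
    apply intervalIntegral.integral_congr
    intro x hx
    have hx1 : (1:ℝ) ≤ x := le_trans ha ((Set.uIcc_of_le hT ▸ hx).1)
    simp [Real.norm_eq_abs, abs_of_pos (hpos x hx1)]
  have hIoi : IntegrableOn ψ (Set.Ioi a) := by
    apply integrableOn_Ioi_of_intervalIntegral_norm_bounded C a hψIoc tendsto_id
    filter_upwards [eventually_ge_atTop a] with i hi
    rw [hnorm i hi]; exact hC i hi
  have hIci : IntegrableOn ψ (Set.Ici a) := by
    rwa [integrableOn_Ici_iff_integrableOn_Ioi]
  have hIcieq : (∫ t in Set.Ici a, ψ t) = ∫ t in Set.Ioi a, ψ t :=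
    integral_Ici_eq_integral_Ioi
  -- ψ' integrable on Ioi a
  have hψ'Ioc : ∀ i : ℝ, IntegrableOn ψ' (Set.Ioc a i) := by
    intro i
    rcases le_or_gt i a with h | h
    · simp [Set.Ioc_eq_empty (not_lt.2 h)]
    · exact (intervalIntegrable_iff_integrableOn_Ioc_of_le h.le).1 (hψ'ii i h.le)
  have hψ'Ioi : IntegrableOn ψ' (Set.Ioi a) := by
    apply integrableOn_Ioi_of_intervalIntegral_norm_bounded (ψ a) a hψ'Ioc tendsto_id
    filter_upwards [eventually_ge_atTop a] with i hi
    have h1 : (∫ x in a..i, ‖ψ' x‖) = ∫ x in a..i, -ψ' x := by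
      apply intervalIntegral.integral_congr
      intro x hx
      have hx1 : (1:ℝ) ≤ x := le_trans ha ((Set.uIcc_of_le hi ▸ hx).1)
      simp [Real.norm_eq_abs, abs_of_neg (hneg x hx1)]
    rw [h1, intervalIntegral.integral_neg, hftc i hi]
    have := (hpos i (le_trans ha hi)).le
    linarith
  have hFTCinf : ∫ x in Set.Ioi a, ψ' x = 0 - ψ a :=
    integral_Ioi_of_hasDerivAt_of_tendsto'
      (fun x hx => hderiv x (le_trans ha hx)) hψ'Ioi hlim
  -- lower bound
  have hlowint : (∫ x in Set.Ioi a, (-L) * ψ' x) = L * ψ a := by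
    rw [MeasureTheory.integral_const_mul]; rw [hFTCinf]; ring
  have hlower : L * ψ a ≤ ∫ t in Set.Ioi a, ψ t := by
    rw [← hlowint]
    apply setIntegral_mono_on (hψ'Ioi.const_mul (-L)) hIoi measurableSet_Ioi
    intro x hx
    calc (-L) * ψ' x = L * (-ψ' x) := by ring
      _ ≤ ψ x := hlow x (le_of_lt hx)
  -- upper bound
  have hupper : (∫ t in Set.Ioi a, ψ t) ≤ C := by
    have ht := intervalIntegral_tendsto_integral_Ioi a hIoi tendsto_id
    exact le_of_tendsto ht
      (by filter_upwards [eventually_ge_atTop a] with T hT using hC T hT)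
  have hCeq : C = L * ψ a * (1 + A / (1 - A)) := by
    rw [hCdef]
    field_simp
    ring
  refine ⟨hIci, ?_, ?_⟩
  · rw [hIcieq]; exact hlower
  · rw [hIcieq]; rw [← hCeq] at *; exact hupper
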